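/- Let α ∈ (0, 1/2) be fixed. There exists i₀ such that for all integers i ≥ i₀, (1 + α^{i-2}(1-α))·log(1/(1 − e_{i-2}(α))) < log(1/α), where e_j(α) := 1 − ((α^j − α^{j+1})/(1 + α^j − α^{j+1}))^{1/(j+1)}. -/

import Mathlib

noncomputable def ej (α : ℝ) (j : ℕ) : ℝ :=
  1 - ((α ^ j - α ^ (j+1)) / (1 + α ^ j - α ^ (j+1))) ^ ((1:ℝ) / (j+1))

theorem stmt_17 (α : ℝ) (hα : α ∈ Set.Ioo (0:ℝ) (1/2)) :
    ∃ i₀ : ℕ, ∀ i : ℕ, i₀ ≤ i →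
      (1 + α ^ (i-2) * (1 - α)) * Real.log (1 / (1 - ej α (i-2))) <
        Real.log (1 / α) := by
  obtain ⟨hα0, hα2⟩ := hα
  have hα1 : α < 1 := hα2.trans (by norm_num)
  have h1α : (0:ℝ) < 1 - α := by linarith
  set L : ℝ := Real.log (1/α) with hL
  have hLa : L = -Real.log α := by rw [hL, one_div, Real.log_inv]
  -- x j := α^j * (1-α)
  set x : ℕ → ℝ := fun j => α ^ j * (1 - α) with hx
  have hxpos : ∀ j, 0 < x j := fun j => mul_pos (pow_pos hα0 j) h1α
  -- key identity
  have key : ∀ j : ℕ,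
      ((j:ℝ)+1) * (L - (1 + x j) * Real.log (1 / (1 - ej α j))) =
        L - (j:ℝ) * L * x j + (1 + x j) * (Real.log (1 - α) - Real.log (1 + x j)) := by
    intro j
    have hxj : α ^ j - α ^ (j+1) = x j := by simp only [hx]; ring
    have h1x : (0:ℝ) < 1 + x j := by linarith [hxpos j]
    have hfrac : (0:ℝ) < x j / (1 + x j) := div_pos (hxpos j) h1x
    have hden : 1 + α ^ j - α ^ (j+1) = 1 + x j := by simp only [hx]; ring
    have hej : 1 - ej α j = (x j / (1 + x j)) ^ ((1:ℝ) / (j+1)) := by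
      rw [ej, hxj, hden, sub_sub_cancel]
    have hlog : Real.log (1 / (1 - ej α j)) =
        -((1:ℝ)/(j+1) * (Real.log (x j) - Real.log (1 + x j))) := by
      rw [hej, one_div, Real.log_inv, Real.log_rpow hfrac,
        Real.log_div (hxpos j).ne' h1x.ne']
    have hlogx : Real.log (x j) = (j:ℝ) * Real.log α + Real.log (1 - α) := by
      rw [hx]
      simp only []
      rw [Real.log_mul (pow_pos hα0 j).ne' h1α.ne', Real.log_pow]
    have hj1 : ((j:ℝ)+1) ≠ 0 := by positivity
    rw [hlog, hlogx, hLa]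
    have hcast : ((j:ℝ)+1) = ((j+1:ℕ):ℝ) := by push_cast; ring
    field_simp
    ring
  -- limits
  have hx0 : Filter.Tendsto x Filter.atTop (nhds 0) := by
    have := (tendsto_pow_atTop_nhds_zero_of_lt_one hα0.le hα1).mul_const (1 - α)
    simpa using this
  have hjx : Filter.Tendsto (fun j : ℕ => (j:ℝ) * L * x j) Filter.atTop (nhds 0) := by
    have h1 : Filter.Tendsto (fun j : ℕ => (j:ℝ) * α ^ j) Filter.atTop (nhds 0) :=
      tendsto_self_mul_const_pow_of_lt_one hα0.le hα1
    have h2 := (h1.mul_const (L * (1 - α)))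
    simp only [zero_mul] at h2
    refine h2.congr (fun j => by rw [hx]; ring)
  have hlog1x : Filter.Tendsto (fun j : ℕ => Real.log (1 + x j)) Filter.atTop (nhds 0) := by
    have : Filter.Tendsto (fun j : ℕ => 1 + x j) Filter.atTop (nhds 1) := by
      simpa using (tendsto_const_nhds.add hx0)
    have := (Real.continuousAt_log (by norm_num : (1:ℝ) ≠ 0)).tendsto.comp this
    simpa [Function.comp_def] using this
  have hT : Filter.Tendsto
      (fun j : ℕ => L - (j:ℝ) * L * x j + (1 + x j) * (Real.log (1 - α) - Real.log (1 + x j)))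
      Filter.atTop (nhds (L + Real.log (1 - α))) := by
    have h1 : Filter.Tendsto (fun j : ℕ => 1 + x j) Filter.atTop (nhds 1) := by
      simpa using (tendsto_const_nhds.add hx0)
    have h2 : Filter.Tendsto (fun j : ℕ => Real.log (1 - α) - Real.log (1 + x j))
        Filter.atTop (nhds (Real.log (1 - α))) := by
      simpa using (tendsto_const_nhds.sub hlog1x)
    have h3 : Filter.Tendsto (fun j : ℕ => L - (j:ℝ) * L * x j) Filter.atTop (nhds (L - 0)) :=
      tendsto_const_nhds.sub hjx
    have := h3.add (h1.mul h2)
    simpa using this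
  have hpos : 0 < L + Real.log (1 - α) := by
    have : Real.log α < Real.log (1 - α) := Real.log_lt_log hα0 (by linarith)
    rw [hLa] at *; linarith
  have hev := hT.eventually (eventually_gt_nhds hpos)
  obtain ⟨N, hN⟩ := Filter.eventually_atTop.mp hev
  refine ⟨N + 2, fun i hi => ?_⟩
  have hji : N ≤ i - 2 := by omega
  have h := hN (i-2) hji
  rw [← key (i-2)] at h
  simp only [hx] at h
  have hj1 : (0:ℝ) < ((i-2:ℕ):ℝ) + 1 := by positivity
  nlinarith [h, hj1]
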